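/- arXiv:2212.09087 — 2 statements merged into one kernel-verified Lean document; each statement's English description precedes it below -/
import Mathlib

section
/- Let R be a commutative Noetherian ring and let I be a regular stable trace ideal of R. Then S := (I : I) is a module finite birational extension of R satisfying S ≅ Hom_R(S, R) as R-modules (i.e. (R : (I : I)) ≅ (I : I)). -/
set_option maxHeartbeats 1000000
set_option synthInstance.maxHeartbeats 400000

open CategoryTheory

universe u

/-- The `i`-th Ext module `Ext_A^i(M, N)` over a commutative ring `A`. -/
noncomputable def ExtModule (A : Type u) [CommRing A] (M N : Type u)
    [AddCommGroup M] [Module A M] [AddCommGroup N] [Module A N] (i : ℕ) : ModuleCat.{u} A :=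
  ((Ext A (ModuleCat.{u} A) i).obj (Opposite.op (ModuleCat.of A M))).obj (ModuleCat.of A N)

/-- A module is torsion-free if nonzerodivisors of the ring act injectively. -/
def IsTorsionFreeModule (A : Type*) [CommRing A] (M : Type*) [AddCommGroup M]
    [Module A M] : Prop :=
  ∀ a ∈ nonZeroDivisors A, ∀ m : M, a • m = 0 → m = 0

/-- The grade of an ideal `J`: the length of a maximal regular sequence contained in `J`. -/
noncomputable def Ideal.grade {A : Type*} [CommRing A] (J : Ideal A) : ℕ∞ :=
  sSup {n : ℕ∞ | ∃ rs : List A, (rs.length : ℕ∞) = n ∧ (∀ r ∈ rs, r ∈ J) ∧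
    RingTheory.Sequence.IsWeaklyRegular A rs}

/-- A Cohen–Macaulay local ring: Noetherian local with depth equal to Krull dimension. -/
def IsCohenMacaulayLocalRing (A : Type*) [CommRing A] : Prop :=
  IsNoetherianRing A ∧ ∃ _ : IsLocalRing A,
    ((IsLocalRing.maximalIdeal A).grade : WithBot ℕ∞) = ringKrullDim A

/-- A Cohen–Macaulay ring: Noetherian, all localizations at primes are CM local rings. -/
def IsCohenMacaulayRing (A : Type*) [CommRing A] : Prop :=
  IsNoetherianRing A ∧ ∀ (p : Ideal A) [p.IsPrime],
    IsCohenMacaulayLocalRing (Localization.AtPrime p)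

/-- A Gorenstein local ring: Noetherian local of finite self-injective dimension,
expressed via vanishing of `Ext^{n+1}(A/I, A)` for all ideals `I` (Baer's criterion). -/
def IsGorensteinLocalRing (A : Type u) [CommRing A] : Prop :=
  IsLocalRing A ∧ IsNoetherianRing A ∧
    ∃ n : ℕ, ∀ I : Ideal A, Subsingleton (ExtModule A (A ⧸ I) A (n + 1))

/-- A Gorenstein ring: Noetherian, all localizations at maximal ideals are Gorenstein local. -/
def IsGorensteinRing (A : Type u) [CommRing A] : Prop :=
  IsNoetherianRing A ∧ ∀ (m : Ideal A) [m.IsMaximal],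
    IsGorensteinLocalRing (Localization.AtPrime m)

/-- Generically Gorenstein: the localization at every associated prime is Gorenstein. -/
def IsGenericallyGorenstein (A : Type u) [CommRing A] : Prop :=
  ∀ (p : Ideal A) [p.IsPrime], p ∈ associatedPrimes A A →
    IsGorensteinLocalRing (Localization.AtPrime p)

/-- The trace ideal of a module: the sum of the images of all linear maps to the ring. -/
def traceIdeal (A : Type*) [CommRing A] (M : Type*) [AddCommGroup M] [Module A M] :
    Ideal A :=
  ⨆ f : M →ₗ[A] A, LinearMap.range f

/-- The image of an ideal inside the total ring of fractions. -/
noncomputable def Ideal.toFrac {A : Type u} [CommRing A] (I : Ideal A) :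
    Submodule A (FractionRing A) :=
  Submodule.map (Algebra.linearMap A (FractionRing A)) I

/-- The conductor `(R : S)` of a birational extension `R ⊆ S ⊆ Q(R)`,
as a submodule of the total ring of fractions. -/
noncomputable def conductorFrac (R : Type u) [CommRing R]
    (S : Subalgebra R (FractionRing R)) : Submodule R (FractionRing R) :=
  (1 : Submodule R (FractionRing R)) / Subalgebra.toSubmodule S

/-- `M ∈ Ω CM(A)`: there is an exact sequence `0 → M → P → N → 0` with `P` a finitely
generated projective `A`-module and `N` a finitely generated torsion-free
(equivalently, over a 1-dimensional CM ring, maximal Cohen–Macaulay) `A`-module. -/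
def InSyzygyOfCM (A : Type u) [CommRing A] (M : Type u) [AddCommGroup M] [Module A M] :
    Prop :=
  ∃ (P N : Type u) (_ : AddCommGroup P) (_ : Module A P) (_ : AddCommGroup N)
    (_ : Module A N), Module.Projective A P ∧ Module.Finite A P ∧ Module.Finite A N ∧
      IsTorsionFreeModule A N ∧
      ∃ (f : M →ₗ[A] P) (g : P →ₗ[A] N),
        Function.Injective f ∧ Function.Surjective g ∧ LinearMap.range f = LinearMap.ker g

section Aux

variable {R : Type u} [CommRing R]

/-- Cross multiplication: for a linear map between submodules of the fraction ring,
`f n * m = f m * n`. -/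
lemma crossMul {N M : Submodule R (FractionRing R)} (f : ↥N →ₗ[R] ↥M) (n m : ↥N) :
    (f n : FractionRing R) * (m : FractionRing R)
      = (f m : FractionRing R) * (n : FractionRing R) := by
  set e := algebraMap R (FractionRing R) with he
  obtain ⟨⟨a, s⟩, hs⟩ := IsLocalization.surj (nonZeroDivisors R) (n : FractionRing R)
  obtain ⟨⟨b, t⟩, ht⟩ := IsLocalization.surj (nonZeroDivisors R) (m : FractionRing R)
  have hus : IsUnit (e (s : R)) := IsLocalization.map_units (FractionRing R) s
  have hut : IsUnit (e (t : R)) := IsLocalization.map_units (FractionRing R) t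
  have key : ((s : R) * b) • n = ((t : R) * a) • m := by
    ext
    push_cast [Submodule.coe_smul]
    rw [Algebra.smul_def, Algebra.smul_def, map_mul, map_mul]
    calc e (s:R) * e b * (n : FractionRing R)
        = e (s:R) * ((m : FractionRing R) * e (t:R)) * (n : FractionRing R) := by rw [ht]
      _ = e (t:R) * (((n : FractionRing R) * e (s:R)) * (m : FractionRing R)) := by ring
      _ = e (t:R) * (e a * (m : FractionRing R)) := by rw [hs]
      _ = e (t:R) * e a * (m : FractionRing R) := by ring
  have key2 : ((s : R) * b) • (f n) = ((t : R) * a) • (f m) := by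
    rw [← map_smul, ← map_smul, key]
  have key3 : e ((s:R) * b) * (f n : FractionRing R)
      = e ((t:R) * a) * (f m : FractionRing R) := by
    have := congrArg (Subtype.val) key2
    simpa [Algebra.smul_def] using this
  refine (hus.mul hut).mul_left_cancel ?_
  calc e (s:R) * e (t:R) * ((f n : FractionRing R) * (m : FractionRing R))
      = e (s:R) * (f n : FractionRing R) * ((m : FractionRing R) * e (t:R)) := by ring
    _ = e (s:R) * (f n : FractionRing R) * e b := by rw [ht]
    _ = e ((s:R) * b) * (f n : FractionRing R) := by rw [map_mul]; ring
    _ = e ((t:R) * a) * (f m : FractionRing R) := key3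
    _ = e (t:R) * (f m : FractionRing R) * e a := by rw [map_mul]; ring
    _ = e (t:R) * (f m : FractionRing R) * ((n : FractionRing R) * e (s:R)) := by rw [hs]
    _ = e (s:R) * e (t:R) * ((f m : FractionRing R) * (n : FractionRing R)) := by ring

/-- `Hom(N, M) ≃ M / N` for submodules of the fraction ring, provided `N` contains a unit. -/
noncomputable def homEquivDiv (N M : Submodule R (FractionRing R)) (u : FractionRing R)
    (hu : IsUnit u) (huN : u ∈ N) : (↥N →ₗ[R] ↥M) ≃ₗ[R] ↥(M / N) := by
  have hkey : ∀ (f : ↥N →ₗ[R] ↥M) (n : ↥N),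
      (f ⟨u, huN⟩ : FractionRing R) * ↑hu.unit⁻¹ * (n : FractionRing R) = (f n : FractionRing R) := by
    intro f n
    have h1 := crossMul f ⟨u, huN⟩ n
    calc (f ⟨u, huN⟩ : FractionRing R) * ↑hu.unit⁻¹ * (n : FractionRing R)
        = (f ⟨u, huN⟩ : FractionRing R) * (n : FractionRing R) * ↑hu.unit⁻¹ := by ring
      _ = (f n : FractionRing R) * u * ↑hu.unit⁻¹ := by rw [h1]
      _ = (f n : FractionRing R) * (u * ↑hu.unit⁻¹) := by ring
      _ = (f n : FractionRing R) := by rw [IsUnit.mul_val_inv, mul_one]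
  refine
  { toFun := fun f => ⟨(f ⟨u, huN⟩ : FractionRing R) * ↑hu.unit⁻¹, ?_⟩
    map_add' := ?_
    map_smul' := ?_
    invFun := fun x =>
      { toFun := fun n => ⟨(x : FractionRing R) * (n : FractionRing R),
          Submodule.mem_div_iff_forall_mul_mem.mp x.2 _ n.2⟩
        map_add' := by intro n m; ext; push_cast; ring
        map_smul' := by intro c n; ext; push_cast [Algebra.smul_def]; simp only [id]; ring }
    left_inv := ?_
    right_inv := ?_ }
  · rw [Submodule.mem_div_iff_forall_mul_mem]
    intro y hy
    rw [hkey f ⟨y, hy⟩]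
    exact (f ⟨y, hy⟩).2
  · intro f g; ext; simp only [LinearMap.add_apply, Submodule.coe_add, AddSubmonoid.mk_add_mk]; push_cast; ring
  · intro c f
    ext
    simp only [LinearMap.smul_apply, SetLike.val_smul, Algebra.smul_def, RingHom.id_apply]
    ring
  · intro f
    ext n
    exact hkey f n
  · intro x
    ext
    simp only
    calc (x : FractionRing R) * u * ↑hu.unit⁻¹ = (x : FractionRing R) * (u * ↑hu.unit⁻¹) := by ring
      _ = (x : FractionRing R) := by rw [IsUnit.mul_val_inv, mul_one]

end Aux

/-- if `I` is a regular stable trace ideal of a commutative Noetherian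
ring `R`, then `S := (I : I)` is a module finite birational extension of `R` with
`S ≅ Hom_R(S, R)`, i.e. `(R : (I : I)) ≅ (I : I)`. -/
theorem colon_self_birational_and_selfdual_of_stable_trace (R : Type u) [CommRing R]
    [IsNoetherianRing R] (I : Ideal R)
    (hreg : ∃ a ∈ I, a ∈ nonZeroDivisors R)
    (hstable : Nonempty ((↥I) ≃ₗ[R] ((↥I) →ₗ[R] (↥I))))
    (htrace : ∃ (M : Type u) (_ : AddCommGroup M) (_ : Module R M),
      Module.Finite R M ∧ I = traceIdeal R M) :
    (1 : Submodule R (FractionRing R)) ≤ I.toFrac / I.toFrac ∧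
    (I.toFrac / I.toFrac) * (I.toFrac / I.toFrac) ≤ I.toFrac / I.toFrac ∧
    Module.Finite R (↥(I.toFrac / I.toFrac)) ∧
    Nonempty ((↥((1 : Submodule R (FractionRing R)) / (I.toFrac / I.toFrac))) ≃ₗ[R]
      (↥(I.toFrac / I.toFrac))) := by
  classical
  obtain ⟨a, haI, haR⟩ := hreg
  set e : R →ₗ[R] FractionRing R := Algebra.linearMap R (FractionRing R) with he
  have einj : Function.Injective e := IsFractionRing.injective R (FractionRing R)
  have hJdef : I.toFrac = Submodule.map e I := rfl
  -- elements of J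
  have hmemJ : ∀ x ∈ I.toFrac, ∃ i ∈ I, e i = x := by
    intro x hx
    rw [hJdef] at hx
    exact Submodule.mem_map.mp hx
  have haJ : e a ∈ I.toFrac := by rw [hJdef]; exact Submodule.mem_map_of_mem haI
  have hua : IsUnit (e a) :=
    IsLocalization.map_units (FractionRing R) (⟨a, haR⟩ : nonZeroDivisors R)
  have hJle1 : I.toFrac ≤ (1 : Submodule R (FractionRing R)) := by
    rw [Submodule.one_eq_range]
    intro x hx
    obtain ⟨i, _, rfl⟩ := hmemJ x hx
    exact ⟨i, rfl⟩
  -- Part 1 : 1 ≤ J / J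
  have part1 : (1 : Submodule R (FractionRing R)) ≤ I.toFrac / I.toFrac := by
    rw [Submodule.one_le, Submodule.mem_div_iff_forall_mul_mem]
    intro y hy
    rwa [one_mul]
  -- Part 2 : closure under multiplication
  have part2 : (I.toFrac / I.toFrac) * (I.toFrac / I.toFrac) ≤ I.toFrac / I.toFrac := by
    rw [Submodule.mul_le]
    intro x hx y hy
    rw [Submodule.mem_div_iff_forall_mul_mem] at hx hy ⊢
    intro z hz
    rw [mul_assoc]
    exact hx _ (hy _ hz)
  -- Part 3 : finiteness
  have hJfg : I.toFrac.FG := by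
    rw [hJdef]
    exact (IsNoetherian.noetherian I).map e
  have part3 : Module.Finite R (↥(I.toFrac / I.toFrac)) := by
    set T : Submodule R (FractionRing R) :=
      Submodule.map ((LinearMap.mul R (FractionRing R)) ↑hua.unit⁻¹) I.toFrac with hT
    have hTfg : T.FG := hJfg.map _
    have hle : I.toFrac / I.toFrac ≤ T := by
      intro x hx
      rw [Submodule.mem_div_iff_forall_mul_mem] at hx
      refine Submodule.mem_map.mpr ⟨x * e a, hx _ haJ, ?_⟩
      show (↑hua.unit⁻¹ : FractionRing R) * (x * e a) = x
      calc (↑hua.unit⁻¹ : FractionRing R) * (x * e a)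
          = x * (e a * ↑hua.unit⁻¹) := by ring
        _ = x := by rw [IsUnit.mul_val_inv, mul_one]
    haveI : IsNoetherian R ↥T := isNoetherian_of_fg_of_noetherian T hTfg
    have h1 : (Submodule.comap T.subtype (I.toFrac / I.toFrac)).FG :=
      IsNoetherian.noetherian _
    have h2 := h1.map T.subtype
    rw [Submodule.map_comap_subtype, inf_eq_right.mpr hle] at h2
    exact Module.Finite.iff_fg.mpr h2
  -- Step A : J / J = 1 / J (uses the trace ideal hypothesis)
  have hA : I.toFrac / I.toFrac = (1 : Submodule R (FractionRing R)) / I.toFrac := by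
    apply le_antisymm
    · intro x hx
      rw [Submodule.mem_div_iff_forall_mul_mem] at hx ⊢
      intro y hy
      exact hJle1 (hx y hy)
    · obtain ⟨M, _, _, _, hIM⟩ := htrace
      intro x hx
      rw [Submodule.mem_div_iff_forall_mul_mem] at hx ⊢
      intro y hy
      obtain ⟨i, hiI, rfl⟩ := hmemJ y hy
      have hiI' : i ∈ traceIdeal R M := hIM ▸ hiI
      refine Submodule.iSup_induction (motive := fun z => x * e z ∈ I.toFrac)
        (fun f : M →ₗ[R] R => LinearMap.range f) hiI' ?_ ?_ ?_
      · rintro f _ ⟨w, rfl⟩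
        -- build g : M →ₗ[R] R with e (g w') = x * e (f w')
        have hfI : ∀ w' : M, f w' ∈ I := by
          intro w'
          rw [hIM]
          exact (le_iSup (fun f : M →ₗ[R] R => LinearMap.range f) f) ⟨w', rfl⟩
        have hrange : ∀ w' : M,
            ((LinearMap.mul R (FractionRing R) x).comp (e.comp f)) w' ∈ LinearMap.range e := by
          intro w'
          have : x * e (f w') ∈ (1 : Submodule R (FractionRing R)) := by
            have : e (f w') ∈ I.toFrac := by
              rw [hJdef]; exact Submodule.mem_map_of_mem (hfI w')
            exact hx _ this
          rwa [Submodule.one_eq_range] at this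
        set g : M →ₗ[R] R :=
          ((LinearEquiv.ofInjective e einj).symm.toLinearMap).comp
            (((LinearMap.mul R (FractionRing R) x).comp (e.comp f)).codRestrict
              (LinearMap.range e) hrange) with hg
        have heg : ∀ w' : M, e (g w') = x * e (f w') := by
          intro w'
          have h1 : e (g w') = ((LinearEquiv.ofInjective e einj) (g w') : FractionRing R) :=
            (LinearEquiv.ofInjective_apply e (h := einj) (g w')).symm
          rw [h1]
          have h2 : (LinearEquiv.ofInjective e einj) (g w') =
              ⟨x * e (f w'), hrange w'⟩ := by
            rw [hg]
            simp only [LinearMap.coe_comp, Function.comp_apply, LinearEquiv.coe_coe]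
            rw [LinearEquiv.apply_symm_apply]
            rfl
          rw [h2]
        have hgI : g w ∈ I := by
          rw [hIM]
          exact (le_iSup (fun f : M →ₗ[R] R => LinearMap.range f) g) ⟨w, rfl⟩
        rw [← heg w, hJdef]
        exact Submodule.mem_map_of_mem hgI
      · show x * e 0 ∈ I.toFrac
        rw [map_zero, mul_zero]; exact Submodule.zero_mem _
      · intro z₁ z₂ h₁ h₂
        show x * e (z₁ + z₂) ∈ I.toFrac
        rw [map_add, mul_add]
        exact Submodule.add_mem _ h₁ h₂
  -- Part 4
  refine ⟨part1, part2, part3, ?_⟩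
  rw [hA]
  -- unit element in 1 / J
  have haD : e a ∈ (1 : Submodule R (FractionRing R)) / I.toFrac := by
    rw [Submodule.mem_div_iff_forall_mul_mem]
    intro y hy
    obtain ⟨i, hiI, rfl⟩ := hmemJ y hy
    rw [Submodule.one_eq_range]
    refine ⟨a * i, ?_⟩
    show (Algebra.linearMap R (FractionRing R)) (a * i) = e a * e i
    simp [he, Algebra.linearMap_apply, map_mul]
  have oneEquiv : R ≃ₗ[R] ↥(1 : Submodule R (FractionRing R)) :=
    (LinearEquiv.ofInjective e einj).trans (LinearEquiv.ofEq _ _ Submodule.one_eq_range.symm)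
  have eqIJ : ↥I ≃ₗ[R] ↥I.toFrac :=
    (Submodule.equivMapOfInjective e einj I).trans (LinearEquiv.ofEq _ _ hJdef.symm)
  have hstab : ↥I ≃ₗ[R] (↥I →ₗ[R] ↥I) := hstable.some
  have d1 : (↥((1:Submodule R (FractionRing R)) / I.toFrac) →ₗ[R]
      ↥(1 : Submodule R (FractionRing R))) ≃ₗ[R]
      ↥((1:Submodule R (FractionRing R)) / ((1:Submodule R (FractionRing R)) / I.toFrac)) :=
    homEquivDiv _ _ (e a) hua haD
  have d2 : (↥I.toFrac →ₗ[R] ↥I.toFrac) ≃ₗ[R] ↥(I.toFrac / I.toFrac) :=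
    homEquivDiv _ _ (e a) hua haJ
  have d3 : (↥I.toFrac →ₗ[R] ↥(1 : Submodule R (FractionRing R))) ≃ₗ[R]
      ↥((1:Submodule R (FractionRing R)) / I.toFrac) :=
    homEquivDiv _ _ (e a) hua haJ
  have φ : ↥((1:Submodule R (FractionRing R)) / I.toFrac) ≃ₗ[R] ↥I :=
    (LinearEquiv.ofEq _ _ hA.symm).trans
      (d2.symm.trans ((LinearEquiv.arrowCongr eqIJ.symm eqIJ.symm).trans hstab.symm))
  exact ⟨d1.symm.trans ((LinearEquiv.arrowCongr φ oneEquiv.symm).trans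
    ((LinearEquiv.arrowCongr eqIJ (LinearEquiv.refl R R)).trans
      ((LinearEquiv.arrowCongr (LinearEquiv.refl R ↥I.toFrac) oneEquiv).trans d3)))⟩
end

section
/- Let R be a 1-dimensional Cohen–Macaulay local Noetherian ring and let I be an ideal of R for which there exists a nonzerodivisor x ∈ I with I² = xI and (xR :_R I) = I. Then I = I(R : I) = tr_R(I), i.e. I is a trace ideal of R. -/
set_option maxHeartbeats 1000000
set_option synthInstance.maxHeartbeats 400000

open CategoryTheory

universe u

/-- over a 1-dimensional Cohen–Macaulay local Noetherian ring `R`, an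
ideal `I` with a nonzerodivisor `x ∈ I` satisfying `I² = xI` and `(xR :_R I) = I`
satisfies `I = I(R : I) = tr_R(I)`; in particular `I` is a trace ideal. -/
theorem ulrich_type_ideal_is_trace (R : Type u) [CommRing R]
    (hCM : IsCohenMacaulayLocalRing R) (hdim : ringKrullDim R = 1)
    (I : Ideal R) (x : R) (hx : x ∈ I) (hxnzd : x ∈ nonZeroDivisors R)
    (hI2 : I * I = Ideal.span {x} * I)
    (hcolon : Submodule.colon (Ideal.span {x}) I = I) :
    I.toFrac = I.toFrac * ((1 : Submodule R (FractionRing R)) / I.toFrac) ∧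
    I = traceIdeal R I := by
  classical
  set K := FractionRing R
  set φ := algebraMap R K with hφ
  have hinj : Function.Injective φ := IsFractionRing.injective R K
  have hmem : ∀ i ∈ I, φ i ∈ I.toFrac := fun i hi => ⟨i, hi, rfl⟩
  constructor
  · -- fractional part
    apply le_antisymm
    · have h1 : (1 : Submodule R K) ≤ 1 / I.toFrac := by
        rw [Submodule.le_div_iff_mul_le, one_mul]
        rintro _ ⟨i, hi, rfl⟩
        exact ⟨i, by simp [Algebra.algebraMap_eq_smul_one]⟩
      calc I.toFrac = I.toFrac * 1 := (mul_one _).symm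
        _ ≤ I.toFrac * (1 / I.toFrac) := mul_le_mul_right h1 _
    · rw [Submodule.mul_le]
      rintro _ ⟨i, hi, rfl⟩ z hz
      simp only [Algebra.linearMap_apply]
      rw [Submodule.mem_div_iff_forall_mul_mem] at hz
      obtain ⟨r, hr⟩ := (Submodule.mem_one).mp (hz _ (hmem x hx))
      have hrI : r ∈ I := by
        rw [← hcolon, Submodule.mem_colon]
        intro p hp
        obtain ⟨s, hs⟩ := (Submodule.mem_one).mp (hz _ (hmem p hp))
        have key : φ (r * p) = φ (x * s) := by
          rw [map_mul, map_mul, hr, hs]; ring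
        rw [smul_eq_mul, Ideal.mem_span_singleton]
        exact ⟨s, hinj key⟩
      have hir : i * r ∈ Ideal.span {x} * I := by
        rw [← hI2]; exact Ideal.mul_mem_mul hi hrI
      obtain ⟨t, htI, hxt⟩ := Ideal.mem_span_singleton_mul.mp hir
      have hxu : IsUnit (φ x) := IsLocalization.map_units K ⟨x, hxnzd⟩
      have step : φ x * (φ i * z) = φ x * φ t := by
        calc φ x * (φ i * z) = φ i * (z * φ x) := by ring
          _ = φ i * φ r := by rw [← hr]
          _ = φ (i * r) := (map_mul φ i r).symm
          _ = φ (x * t) := by rw [hxt]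
          _ = φ x * φ t := map_mul φ x t
      have heq : φ i * z = φ t := hxu.mul_left_cancel step
      rw [heq]
      exact hmem t htI
  · -- trace ideal part
    apply le_antisymm
    · intro a ha
      exact le_iSup (fun f : I →ₗ[R] R => LinearMap.range f) I.subtype ⟨⟨a, ha⟩, rfl⟩
    · apply iSup_le
      intro f
      rintro _ ⟨⟨i, hi⟩, rfl⟩
      have key : ∀ j (hj : j ∈ I), x * f ⟨j, hj⟩ = j * f ⟨x, hx⟩ := by
        intro j hj
        have h1 : x • (⟨j, hj⟩ : I) = j • (⟨x, hx⟩ : I) := by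
          ext; simp [mul_comm]
        calc x * f ⟨j, hj⟩ = f (x • ⟨j, hj⟩) := by rw [map_smul]; rfl
          _ = f (j • ⟨x, hx⟩) := by rw [h1]
          _ = j * f ⟨x, hx⟩ := by rw [map_smul]; rfl
      have hcI : f ⟨x, hx⟩ ∈ I := by
        suffices h : f ⟨x, hx⟩ ∈ Submodule.colon (Ideal.span {x}) I by rwa [hcolon] at h
        rw [Submodule.mem_colon]
        intro p hp
        rw [smul_eq_mul, Ideal.mem_span_singleton, mul_comm, ← key p hp]
        exact ⟨f ⟨p, hp⟩, rfl⟩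
      have hir : i * f ⟨x, hx⟩ ∈ Ideal.span {x} * I := by
        rw [← hI2]; exact Ideal.mul_mem_mul hi hcI
      obtain ⟨t, htI, hxt⟩ := Ideal.mem_span_singleton_mul.mp hir
      have hxft : x * f ⟨i, hi⟩ = x * t := by rw [key i hi, hxt]
      have hsub : (f ⟨i, hi⟩ - t) * x = 0 := by linear_combination hxft
      have hz := mem_nonZeroDivisors_iff_right.mp hxnzd _ hsub
      have : f ⟨i, hi⟩ = t := sub_eq_zero.mp hz
      rw [this]; exact htI
end
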